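/- For every δ > 0 and every λ ∈ ℂ with Re(λ) > 0, the Laplace transform of the function V_δ(t) = exp(-δ²/(4t))/√(π t) equals e^{-√λ · δ}/√λ, where √λ denotes the principal branch of the square root. -/

import Mathlib

open MeasureTheory Real Complex

section LaplaceAux
open Set Filter


lemma glasser_inv (α β : ℝ) (hα : 0 < α) (hβ : 0 < β) :
    ∫ u in Ioi (0:ℝ), Real.exp (-(α*u - β/u)^2)
      = ∫ u in Ioi (0:ℝ), (β/(α*u^2)) * Real.exp (-(α*u - β/u)^2) := by
  have himg : (fun u : ℝ => β/(α*u)) '' Ioi 0 = Ioi 0 := by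
    ext v
    constructor
    · rintro ⟨u, hu, rfl⟩
      exact div_pos hβ (mul_pos hα hu)
    · intro hv
      exact ⟨β/(α*v), div_pos hβ (mul_pos hα hv), by field_simp⟩
  have hderiv : ∀ u ∈ Ioi (0:ℝ), HasDerivWithinAt (fun u : ℝ => β/(α*u))
      (-(β/(α*u^2))) (Ioi 0) u := by
    intro u hu
    have hu0 : u ≠ 0 := ne_of_gt hu
    have : HasDerivAt (fun u : ℝ => β/(α*u)) (-(β/(α*u^2))) u := by
      have h1 : HasDerivAt (fun u : ℝ => u⁻¹) (-(u^2)⁻¹) u := hasDerivAt_inv hu0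
      have h2 := (h1.const_mul (β/α))
      have he : ∀ v : ℝ, β/(α*v) = (β/α) * v⁻¹ := by intro v; field_simp
      simp only [he]
      exact h2.congr_deriv (by ring)
    exact this.hasDerivWithinAt
  have hinj : InjOn (fun u : ℝ => β/(α*u)) (Ioi 0) := by
    intro a ha b hb hab
    simp only at hab
    have ha0 : a ≠ 0 := ne_of_gt ha
    have hb0 : b ≠ 0 := ne_of_gt hb
    rw [div_eq_div_iff (by positivity) (by positivity)] at hab
    have h2 : (β*α)*a = (β*α)*b := by ring_nf; ring_nf at hab; linarith
    exact mul_left_cancel₀ (by positivity) h2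
  have := integral_image_eq_integral_abs_deriv_smul measurableSet_Ioi hderiv hinj
      (fun u => Real.exp (-(α*u - β/u)^2))
  rw [himg] at this
  rw [this]
  apply setIntegral_congr_fun measurableSet_Ioi
  intro u hu
  have hu0 : (u:ℝ) ≠ 0 := ne_of_gt hu
  have h3 : α * (β/(α*u)) - β/(β/(α*u)) = -(α*u - β/u) := by field_simp; ring
  have h4 : |(-(β/(α*u^2)))| = β/(α*u^2) := by
    rw [abs_neg, abs_of_pos (div_pos hβ (mul_pos hα (pow_pos hu 2)))]
  simp only [smul_eq_mul, h3, h4, neg_sq]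


lemma glasser_img (α β : ℝ) (hα : 0 < α) (hβ : 0 < β) :
    (fun u : ℝ => α*u - β/u) '' Ioi 0 = univ := by
  ext v
  simp only [mem_univ, iff_true]
  set s := Real.sqrt (v^2 + 4*α*β) with hs
  have hs2 : s^2 = v^2 + 4*α*β := Real.sq_sqrt (by positivity)
  have hsv : -v < s := by
    nlinarith [Real.sqrt_nonneg (v^2+4*α*β), abs_nonneg v, _root_.sq_abs v]
  set u := (v + s)/(2*α) with hu
  have hupos : 0 < u := by
    apply div_pos _ (by positivity)
    linarith
  refine ⟨u, hupos, ?_⟩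
  have hu0 : u ≠ 0 := ne_of_gt hupos
  have key : α * u^2 = v * u + β := by
    rw [hu]; field_simp; nlinarith [hs2]
  field_simp
  nlinarith [key]

lemma glasser_main (α β : ℝ) (hα : 0 < α) (hβ : 0 < β) :
    ∫ u in Ioi (0:ℝ), Real.exp (-(α*u - β/u)^2) = Real.sqrt π / (2*α) := by
  have hconts : ContinuousOn (fun u : ℝ => Real.exp (-(α*u - β/u)^2)) (Ioi 0) := by
    apply Real.continuous_exp.comp_continuousOn
    apply ContinuousOn.neg
    apply ContinuousOn.pow
    exact (continuousOn_const.mul continuousOn_id).sub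
      (continuousOn_const.div continuousOn_id (fun u hu => ne_of_gt hu))
  have hmeas : AEStronglyMeasurable (fun u : ℝ => Real.exp (-(α*u - β/u)^2))
      (volume.restrict (Ioi 0)) := hconts.aestronglyMeasurable measurableSet_Ioi
  have hf : IntegrableOn (fun u : ℝ => Real.exp (-(α*u - β/u)^2)) (Ioi 0) := by
    apply Integrable.mono' (g := fun u : ℝ => Real.exp (2*α*β) * Real.exp (-(α^2)*u^2))
    · exact ((integrable_exp_neg_mul_sq (by positivity : (0:ℝ) < α^2)).const_mul _).integrableOn
    · exact hmeas
    · filter_upwards [ae_restrict_mem measurableSet_Ioi] with u hu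
      rw [Real.norm_eq_abs, Real.abs_exp, ← Real.exp_add]
      apply Real.exp_le_exp.mpr
      have hu0 : u ≠ 0 := ne_of_gt hu
      have h5 : (α*u - β/u)^2 = α^2*u^2 - 2*(α*β) + (β/u)^2 := by field_simp; ring
      nlinarith [sq_nonneg (β/u)]
  have hderiv : ∀ u ∈ Ioi (0:ℝ), HasDerivWithinAt (fun u : ℝ => α*u - β/u)
      (α + β/u^2) (Ioi 0) u := by
    intro u hu
    have hu0 : u ≠ 0 := ne_of_gt hu
    have h1 : HasDerivAt (fun u : ℝ => α*u - β*u⁻¹) (α*1 - β*(-(u^2)⁻¹)) u :=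
      ((hasDerivAt_id u).const_mul α).sub ((hasDerivAt_inv hu0).const_mul β)
    have h2 : HasDerivAt (fun u : ℝ => α*u - β/u) (α + β/u^2) u := by
      have he : ∀ v : ℝ, α*v - β/v = α*v - β*v⁻¹ := by intro v; rw [div_eq_mul_inv]
      simp only [he]
      convert h1 using 1
      field_simp
      ring
    exact h2.hasDerivWithinAt
  have hinj : InjOn (fun u : ℝ => α*u - β/u) (Ioi 0) := by
    have hmono : StrictMonoOn (fun u : ℝ => α*u - β/u) (Ioi 0) := by
      intro a ha b hb hab
      simp only
      have : β/b < β/a := div_lt_div_of_pos_left hβ ha hab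
      have : α*a < α*b := by nlinarith
      linarith
    exact hmono.injOn
  have key := integral_image_eq_integral_abs_deriv_smul measurableSet_Ioi hderiv hinj
      (fun v => Real.exp (-v^2))
  rw [glasser_img α β hα hβ] at key
  have hgauss : ∫ v in (univ : Set ℝ), Real.exp (-v^2) = Real.sqrt π := by
    rw [Measure.restrict_univ]
    have := integral_gaussian 1
    simpa using this
  rw [hgauss] at key
  -- integrability of the second piece
  have hinv_deriv : ∀ u ∈ Ioi (0:ℝ), HasDerivWithinAt (fun u : ℝ => β/(α*u))
      (-(β/(α*u^2))) (Ioi 0) u := by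
    intro u hu
    have hu0 : u ≠ 0 := ne_of_gt hu
    have h1 : HasDerivAt (fun u : ℝ => u⁻¹) (-(u^2)⁻¹) u := hasDerivAt_inv hu0
    have h2 := h1.const_mul (β/α)
    have he : ∀ v : ℝ, β/(α*v) = (β/α) * v⁻¹ := by intro v; field_simp
    simp only [he]
    refine HasDerivAt.hasDerivWithinAt ?_
    exact h2.congr_deriv (by ring)
  have hinv_inj : InjOn (fun u : ℝ => β/(α*u)) (Ioi 0) := by
    intro a ha b hb hab
    simp only at hab
    have ha' : (0:ℝ) < a := ha
    have hb' : (0:ℝ) < b := hb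
    rw [div_eq_div_iff (by positivity) (by positivity)] at hab
    have h2 : (β*α)*a = (β*α)*b := by ring_nf; ring_nf at hab; linarith
    exact mul_left_cancel₀ (by positivity) h2
  have himg : (fun u : ℝ => β/(α*u)) '' Ioi 0 = Ioi 0 := by
    ext v
    constructor
    · rintro ⟨u, hu, rfl⟩
      exact div_pos hβ (mul_pos hα hu)
    · intro hv
      exact ⟨β/(α*v), div_pos hβ (mul_pos hα hv), by field_simp⟩
  have hg2 : IntegrableOn (fun u : ℝ => (β/(α*u^2)) * Real.exp (-(α*u - β/u)^2)) (Ioi 0) := by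
    have hiff := integrableOn_image_iff_integrableOn_abs_deriv_smul measurableSet_Ioi
      hinv_deriv hinv_inj (fun u => Real.exp (-(α*u - β/u)^2))
    rw [himg] at hiff
    have h1 := hiff.mp hf
    apply h1.congr_fun _ measurableSet_Ioi
    intro u hu
    have hu0 : (u:ℝ) ≠ 0 := ne_of_gt hu
    have h3 : α * (β/(α*u)) - β/(β/(α*u)) = -(α*u - β/u) := by field_simp; ring
    have h4 : |(-(β/(α*u^2)))| = β/(α*u^2) := by
      rw [abs_neg, abs_of_pos (div_pos hβ (mul_pos hα (pow_pos hu 2)))]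
    simp only [smul_eq_mul, h3, h4, neg_sq]
  -- rewrite key
  have key2 : Real.sqrt π = α * ((∫ u in Ioi (0:ℝ), Real.exp (-(α*u - β/u)^2))
      + ∫ u in Ioi (0:ℝ), (β/(α*u^2)) * Real.exp (-(α*u - β/u)^2)) := by
    rw [key]
    rw [← integral_add hf hg2, ← integral_const_mul]
    apply setIntegral_congr_fun measurableSet_Ioi
    intro u hu
    have hu0 : (u:ℝ) ≠ 0 := ne_of_gt hu
    have h4 : |α + β/u^2| = α + β/u^2 := by
      rw [abs_of_pos]; positivity
    simp only [smul_eq_mul, h4]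
    field_simp
  rw [← glasser_inv α β hα hβ] at key2
  have h2α : (2*α) ≠ 0 := by positivity
  field_simp at key2 ⊢
  linarith



lemma glasser2 (s b : ℝ) (hs : 0 < s) (hb : 0 < b) :
    ∫ u in Ioi (0:ℝ), Real.exp (-(s*u^2) - b^2/u^2)
      = Real.sqrt π / (2 * Real.sqrt s) * Real.exp (-(2*b*Real.sqrt s)) := by
  have hss : Real.sqrt s > 0 := Real.sqrt_pos.mpr hs
  have hptw : ∀ u ∈ Ioi (0:ℝ), Real.exp (-(s*u^2) - b^2/u^2)
      = Real.exp (-(Real.sqrt s * u - b/u)^2) * Real.exp (-(2*b*Real.sqrt s)) := by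
    intro u hu
    have hu0 : u ≠ 0 := ne_of_gt hu
    rw [← Real.exp_add]
    congr 1
    have h1 : Real.sqrt s ^ 2 = s := Real.sq_sqrt hs.le
    field_simp
    linear_combination (u^2*u^2) * h1
  rw [setIntegral_congr_fun measurableSet_Ioi hptw, integral_mul_const,
    glasser_main (Real.sqrt s) b hss hb]

lemma laplace_real (s b : ℝ) (hs : 0 < s) (hb : 0 < b) :
    ∫ t in Ioi (0:ℝ), Real.exp (-(s*t)) * (Real.exp (-b^2/t) / Real.sqrt (π*t))
      = Real.exp (-(2*b*Real.sqrt s)) / Real.sqrt s := by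
  have hderiv : ∀ u ∈ Ioi (0:ℝ), HasDerivWithinAt (fun u : ℝ => u^2) (2*u) (Ioi 0) u := by
    intro u hu
    have := hasDerivAt_pow 2 u
    norm_num at this
    exact this.hasDerivWithinAt
  have hinj : InjOn (fun u : ℝ => u^2) (Ioi 0) := by
    intro a ha b' hb' hab
    simp only at hab
    have ha' : (0:ℝ) < a := ha
    have hb'' : (0:ℝ) < b' := hb'
    nlinarith
  have himg : (fun u : ℝ => u^2) '' Ioi 0 = Ioi 0 := by
    ext v
    constructor
    · rintro ⟨u, hu, rfl⟩
      exact pow_pos (mem_Ioi.mp hu) 2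
    · intro hv
      exact ⟨Real.sqrt v, Real.sqrt_pos.mpr hv, Real.sq_sqrt (le_of_lt hv)⟩
  have key := integral_image_eq_integral_abs_deriv_smul measurableSet_Ioi hderiv hinj
      (fun t => Real.exp (-(s*t)) * (Real.exp (-b^2/t) / Real.sqrt (π*t)))
  rw [himg] at key
  rw [key]
  have hptw : ∀ u ∈ Ioi (0:ℝ), |2*u| • (Real.exp (-(s*u^2)) * (Real.exp (-b^2/u^2) / Real.sqrt (π*u^2)))
      = (2/Real.sqrt π) * Real.exp (-(s*u^2) - b^2/u^2) := by
    intro u hu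
    have hu0 : (0:ℝ) < u := hu
    have h1 : Real.sqrt (π*u^2) = Real.sqrt π * u := by
      rw [Real.sqrt_mul Real.pi_pos.le, Real.sqrt_sq hu0.le]
    have h2 : |2*u| = 2*u := abs_of_pos (by linarith)
    have h3 : -b^2/u^2 = -(b^2/u^2) := by ring
    rw [smul_eq_mul, h1, h2, h3, Real.exp_neg, Real.exp_sub, Real.exp_neg]
    have hsp : Real.sqrt π > 0 := Real.sqrt_pos.mpr Real.pi_pos
    have hee : Real.exp (-(s*u^2)) * Real.exp (s*u^2) = 1 := by
      rw [← Real.exp_add]; simp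
    field_simp
    rw [← Real.exp_add]; simp
  rw [setIntegral_congr_fun measurableSet_Ioi hptw, integral_const_mul,
    glasser2 s b hs hb]
  have hsp : Real.sqrt π > 0 := Real.sqrt_pos.mpr Real.pi_pos
  have hss : Real.sqrt s > 0 := Real.sqrt_pos.mpr hs
  field_simp


noncomputable def Gf (δ : ℝ) (t : ℝ) : ℝ := Real.exp (-δ^2/(4*t)) / Real.sqrt (π*t)

lemma aux_int (s c : ℝ) (hs : -1 < s) (hc : 0 < c) :
    IntegrableOn (fun t : ℝ => t ^ s * Real.exp (-c * t)) (Ioi 0) := by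
  have := integrableOn_rpow_mul_exp_neg_mul_rpow (p := 1) hs one_pos hc
  apply this.congr_fun _ measurableSet_Ioi
  intro t ht
  simp [Real.rpow_one]

lemma Gf_nonneg (δ t : ℝ) : 0 ≤ Gf δ t := by
  unfold Gf; positivity

lemma Gf_le (δ : ℝ) {t : ℝ} (ht : 0 < t) : Gf δ t ≤ (Real.sqrt π)⁻¹ * t ^ (-(1/2):ℝ) := by
  unfold Gf
  have h1 : Real.exp (-δ^2/(4*t)) ≤ 1 := by
    apply Real.exp_le_one_iff.mpr
    apply div_nonpos_of_nonpos_of_nonneg (neg_nonpos.mpr (sq_nonneg δ)) (by positivity)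
  have h2 : Real.sqrt (π*t) = Real.sqrt π * t ^ ((1/2):ℝ) := by
    rw [Real.sqrt_mul Real.pi_pos.le, Real.sqrt_eq_rpow t]
  rw [h2, Real.rpow_neg ht.le]
  rw [div_eq_mul_inv, mul_inv]
  exact mul_le_mul_of_nonneg_right h1 (by positivity) |>.trans_eq (by rw [one_mul])

lemma Gf_contOn (δ : ℝ) : ContinuousOn (Gf δ) (Ioi 0) := by
  unfold Gf
  apply ContinuousOn.div
  · refine Real.continuous_exp.comp_continuousOn
      (continuousOn_const.div (continuousOn_const.mul continuous_id.continuousOn)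
        (fun t ht => ?_))
    have h : (0:ℝ) < t := ht
    positivity
  · exact (Real.continuous_sqrt.comp (continuous_const.mul continuous_id)).continuousOn
  · intro t ht
    have ht0 : (0:ℝ) < t := ht
    positivity

lemma Gf_meas (δ : ℝ) : AEStronglyMeasurable (fun t => ((Gf δ t : ℝ) : ℂ))
    (volume.restrict (Ioi 0)) :=
  (Complex.continuous_ofReal.comp_continuousOn (Gf_contOn δ)).aestronglyMeasurable
    measurableSet_Ioi

lemma aux_norm (δ : ℝ) (lam : ℂ) {c : ℝ} (h : c ≤ lam.re) {t : ℝ} (ht : t ∈ Ioi (0:ℝ)) :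
    ‖Complex.exp (-lam * t) * ((Gf δ t : ℝ) : ℂ)‖
      ≤ (Real.sqrt π)⁻¹ * (t ^ (-(1/2):ℝ) * Real.exp (-c * t)) := by
  have ht0 : (0:ℝ) < t := ht
  rw [norm_mul, Complex.norm_exp, Complex.norm_real, Real.norm_eq_abs,
    _root_.abs_of_nonneg (Gf_nonneg δ t)]
  have h1 : (-lam * (t:ℂ)).re = -lam.re * t := by simp [Complex.mul_re]
  rw [h1]
  have h2 : Real.exp (-lam.re * t) ≤ Real.exp (-c * t) := by
    apply Real.exp_le_exp.mpr
    apply mul_le_mul_of_nonneg_right (neg_le_neg h) ht0.le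
  calc Real.exp (-lam.re * t) * Gf δ t
      ≤ Real.exp (-c * t) * ((Real.sqrt π)⁻¹ * t ^ (-(1/2):ℝ)) :=
        mul_le_mul h2 (Gf_le δ ht0) (Gf_nonneg δ t) (by positivity)
    _ = (Real.sqrt π)⁻¹ * (t ^ (-(1/2):ℝ) * Real.exp (-c * t)) := by ring

lemma aux_integrable (δ : ℝ) (lam : ℂ) {c : ℝ} (hc : 0 < c) (h : c ≤ lam.re) :
    IntegrableOn (fun t : ℝ => Complex.exp (-lam * t) * ((Gf δ t : ℝ) : ℂ)) (Ioi 0) := by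
  apply Integrable.mono' (((aux_int (-(1/2)) c (by norm_num) hc).const_mul ((Real.sqrt π)⁻¹)))
  · apply AEStronglyMeasurable.mul _ (Gf_meas δ)
    exact (Complex.continuous_exp.comp (continuous_const.mul Complex.continuous_ofReal)).aestronglyMeasurable
  · filter_upwards [ae_restrict_mem measurableSet_Ioi] with t ht
    exact aux_norm δ lam h ht

-- the LHS as a function of lam
noncomputable def Flt (δ : ℝ) (lam : ℂ) : ℂ :=
  ∫ t in Ioi (0:ℝ), Complex.exp (-lam * t) * ((Gf δ t : ℝ) : ℂ)

lemma Flt_diff (δ : ℝ) : DifferentiableOn ℂ (Flt δ) {z : ℂ | 0 < z.re} := by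
  intro lam hlam
  apply DifferentiableAt.differentiableWithinAt
  have hr : 0 < lam.re := hlam
  set c := lam.re / 2 with hc
  have hc0 : 0 < c := by positivity
  have key := hasDerivAt_integral_of_dominated_loc_of_deriv_le (μ := volume.restrict (Ioi 0))
    (F := fun l t => Complex.exp (-l * t) * ((Gf δ t : ℝ) : ℂ))
    (F' := fun l t => Complex.exp (-l * t) * (-(t:ℂ)) * ((Gf δ t : ℝ) : ℂ))
    (x₀ := lam)
    (bound := fun t => (Real.sqrt π)⁻¹ * (t ^ ((1/2):ℝ) * Real.exp (-c * t)))
    (s := Metric.ball lam (lam.re / 2)) (Metric.ball_mem_nhds _ (by positivity))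
    ?_ ?_ ?_ ?_ ?_ ?_
  · exact key.2.differentiableAt
  · filter_upwards with l
    apply AEStronglyMeasurable.mul _ (Gf_meas δ)
    exact (Complex.continuous_exp.comp (continuous_const.mul Complex.continuous_ofReal)).aestronglyMeasurable
  · exact aux_integrable δ lam hc0 (by rw [hc]; linarith)
  · apply AEStronglyMeasurable.mul _ (Gf_meas δ)
    apply Continuous.aestronglyMeasurable
    exact (Complex.continuous_exp.comp (continuous_const.mul Complex.continuous_ofReal)).mul
      (Complex.continuous_ofReal.neg)
  · filter_upwards [ae_restrict_mem measurableSet_Ioi] with t ht l hl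
    have ht0 : (0:ℝ) < t := ht
    have hlre : c ≤ l.re := by
      have := Complex.abs_re_le_norm (l - lam)
      have hlt : ‖l - lam‖ < lam.re / 2 := by
        exact mem_ball_iff_norm.mp hl
      have : |l.re - lam.re| < lam.re / 2 := by
        calc |l.re - lam.re| = |(l - lam).re| := by simp
          _ ≤ ‖l - lam‖ := Complex.abs_re_le_norm _
          _ < lam.re / 2 := hlt
      rw [abs_lt] at this
      rw [hc]; linarith [this.1]
    calc ‖Complex.exp (-l * t) * (-(t:ℂ)) * ((Gf δ t : ℝ) : ℂ)‖
        = t * ‖Complex.exp (-l * t) * ((Gf δ t : ℝ) : ℂ)‖ := by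
          rw [norm_mul, norm_mul, norm_mul, norm_neg, Complex.norm_real, Real.norm_eq_abs,
            abs_of_pos ht0]; ring
      _ ≤ t * ((Real.sqrt π)⁻¹ * (t ^ (-(1/2):ℝ) * Real.exp (-c * t))) := by
          apply mul_le_mul_of_nonneg_left (aux_norm δ l hlre ht) ht0.le
      _ = (Real.sqrt π)⁻¹ * (t ^ ((1/2):ℝ) * Real.exp (-c * t)) := by
          have ht2 : t * t ^ (-(1/2):ℝ) = t ^ ((1/2):ℝ) := by
            nth_rewrite 1 [← Real.rpow_one t]
            rw [← Real.rpow_add ht0]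
            norm_num
          rw [← ht2]; ring
  · exact ((aux_int (1/2) c (by norm_num) hc0).const_mul ((Real.sqrt π)⁻¹))
  · filter_upwards [ae_restrict_mem measurableSet_Ioi] with t ht l hl
    have hd : HasDerivAt (fun l : ℂ => Complex.exp (-l * t)) (Complex.exp (-l * t) * (-(t:ℂ))) l := by
      have h1 : HasDerivAt (fun l : ℂ => -l * t) (-(t:ℂ)) l := by
        have := ((hasDerivAt_id l).neg.mul_const (t:ℂ))
        simpa using this
      exact h1.cexp
    exact hd.mul_const _


noncomputable def Rf (δ : ℝ) (lam : ℂ) : ℂ :=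
  Complex.exp (-(lam ^ (1/2:ℂ)) * δ) / lam ^ (1/2:ℂ)

lemma Rf_diff (δ : ℝ) : DifferentiableOn ℂ (Rf δ) {z : ℂ | 0 < z.re} := by
  intro z hz
  apply DifferentiableAt.differentiableWithinAt
  have hz0 : (0:ℝ) < z.re := hz
  have hslit : z ∈ Complex.slitPlane := Or.inl hz0
  have hd1 : DifferentiableAt ℂ (fun z : ℂ => z ^ (1/2:ℂ)) z := by
    have := (hasDerivAt_id z).cpow_const (c := (1/2:ℂ)) hslit
    exact this.differentiableAt
  have hne : z ^ (1/2:ℂ) ≠ 0 := by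
    rw [Ne, Complex.cpow_eq_zero_iff]
    rintro ⟨rfl, -⟩
    simp at hz0
  exact ((hd1.neg.mul_const (δ:ℂ)).cexp).div hd1 hne

lemma eq_on_real (δ : ℝ) (hδ : 0 < δ) (s : ℝ) (hs : 0 < s) :
    Flt δ (s : ℂ) = Rf δ (s : ℂ) := by
  have hss : (0:ℝ) < Real.sqrt s := Real.sqrt_pos.mpr hs
  have h1 : Flt δ (s:ℂ) = ((∫ t in Ioi (0:ℝ), Real.exp (-(s*t)) * Gf δ t : ℝ) : ℂ) := by
    have hcong : ∫ t in Ioi (0:ℝ), Complex.exp (-(s:ℂ) * t) * ((Gf δ t : ℝ) : ℂ)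
        = ∫ t in Ioi (0:ℝ), ((Real.exp (-(s*t)) * Gf δ t : ℝ) : ℂ) := by
      apply setIntegral_congr_fun measurableSet_Ioi
      intro t ht
      show Complex.exp (-(s:ℂ) * t) * ((Gf δ t : ℝ) : ℂ) = ((Real.exp (-(s*t)) * Gf δ t : ℝ) : ℂ)
      have he : (-(s:ℂ) * t) = ((-(s*t) : ℝ) : ℂ) := by push_cast; ring
      rw [he, ← Complex.ofReal_exp, ← Complex.ofReal_mul]
    rw [Flt, hcong]
    exact integral_ofReal
  have h2 : ∫ t in Ioi (0:ℝ), Real.exp (-(s*t)) * Gf δ t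
      = Real.exp (-(2*(δ/2)*Real.sqrt s)) / Real.sqrt s := by
    rw [← laplace_real s (δ/2) hs (by positivity)]
    apply setIntegral_congr_fun measurableSet_Ioi
    intro t ht
    have : -(δ/2)^2/t = -δ^2/(4*t) := by
      field_simp
      ring
    simp only [Gf]
    rw [this]
  have hcp : (s:ℂ) ^ (1/2:ℂ) = ((Real.sqrt s : ℝ) : ℂ) := by
    have := Complex.ofReal_cpow hs.le (1/2)
    rw [← Real.sqrt_eq_rpow] at this
    have h4 : ((1/2:ℝ):ℂ) = (1/2:ℂ) := by norm_num
    rw [← h4]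
    exact this.symm
  have h3 : Rf δ (s:ℂ) = ((Real.exp (-(2*(δ/2)*Real.sqrt s)) / Real.sqrt s : ℝ) : ℂ) := by
    rw [Rf, hcp]
    have he : -((Real.sqrt s : ℂ)) * δ = ((-(2*(δ/2)*Real.sqrt s) : ℝ) : ℂ) := by
      push_cast; ring
    rw [he, ← Complex.ofReal_exp, ← Complex.ofReal_div]
  rw [h1, h2, h3]

lemma main_eq (δ : ℝ) (hδ : 0 < δ) (lam : ℂ) (hlam : 0 < lam.re) :
    Flt δ lam = Rf δ lam := by
  have hUo : IsOpen {z : ℂ | 0 < z.re} := isOpen_lt continuous_const Complex.continuous_re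
  have hUc : IsPreconnected {z : ℂ | 0 < z.re} :=
    (convex_halfSpace_re_gt 0).isPreconnected
  have hF : AnalyticOnNhd ℂ (Flt δ) {z : ℂ | 0 < z.re} := (Flt_diff δ).analyticOnNhd hUo
  have hR : AnalyticOnNhd ℂ (Rf δ) {z : ℂ | 0 < z.re} := (Rf_diff δ).analyticOnNhd hUo
  have h1 : (1:ℂ) ∈ {z : ℂ | 0 < z.re} := by simp
  have htendR : Tendsto (fun n : ℕ => 1 + ((n:ℝ)+1)⁻¹) atTop (nhds 1) := by
    have := tendsto_one_div_add_atTop_nhds_zero_nat (𝕜 := ℝ)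
    have h := this.const_add (1:ℝ)
    simpa [one_div] using h
  have htend : Tendsto (fun n : ℕ => ((1 + ((n:ℝ)+1)⁻¹ : ℝ) : ℂ)) atTop (nhdsWithin 1 {(1:ℂ)}ᶜ) := by
    apply tendsto_nhdsWithin_of_tendsto_nhds_of_eventually_within
    · have : Tendsto (fun x : ℝ => (x : ℂ)) (nhds 1) (nhds 1) := by
        simpa using Complex.continuous_ofReal.tendsto 1
      exact this.comp htendR
    · filter_upwards with n
      simp only [mem_compl_iff, mem_singleton_iff]
      intro h
      have : (1 + ((n:ℝ)+1)⁻¹ : ℝ) = 1 := by exact_mod_cast h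
      have hn : ((n:ℝ)+1)⁻¹ > 0 := by positivity
      linarith
  have hfreq : ∃ᶠ z in nhdsWithin 1 {(1:ℂ)}ᶜ, Flt δ z = Rf δ z := by
    apply htend.frequently
    apply Frequently.of_forall
    intro n
    exact eq_on_real δ hδ _ (by positivity)
  exact hF.eqOn_of_preconnected_of_frequently_eq hR hUc h1 hfreq hlam

end LaplaceAux

/-- For every δ > 0 and λ ∈ ℂ with Re λ > 0, the Laplace transform of
`V_δ(t) = exp(-δ²/(4t))/√(π t)` equals `e^{-√λ δ}/√λ` (principal square root). -/
theorem laplace_transform_heat_kernel_dim2 (δ : ℝ) (hδ : 0 < δ) (lam : ℂ)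
    (hlam : 0 < lam.re) :
    ∫ t in Set.Ioi (0 : ℝ), Complex.exp (-lam * t) *
        (Real.exp (-δ ^ 2 / (4 * t)) / Real.sqrt (Real.pi * t)) =
      Complex.exp (-(lam ^ (1 / 2 : ℂ)) * δ) / lam ^ (1 / 2 : ℂ) := by
  have h := main_eq δ hδ lam hlam
  unfold Flt Rf at h
  simp only [Gf, Complex.ofReal_div] at h
  exact h
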